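/- Let S* ⊆ (0, ∞) be open and additive, and suppose S* is nonempty and S* ≠ (0, ∞). Then the infimum l of S* is positive, i.e., l > 0. -/
import Mathlib

theorem inf_pos_of_proper (Sstar : Set ℝ) (hsub : Sstar ⊆ Set.Ioi 0)
    (hopen : IsOpen Sstar) (hadd : ∀ a ∈ Sstar, ∀ b ∈ Sstar, a + b ∈ Sstar)
    (hne : Sstar.Nonempty) (hproper : Sstar ≠ Set.Ioi 0) :
    0 < sInf Sstar := by
  have hnonneg : 0 ≤ sInf Sstar := le_csInf hne (fun x hx => le_of_lt (hsub hx))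
  by_contra h
  push_neg at h
  have hinf : sInf Sstar = 0 := le_antisymm h hnonneg
  -- get a point y > 0 not in Sstar
  obtain ⟨y, hy, hyn⟩ := Set.exists_of_ssubset (HasSubset.Subset.ssubset_of_ne hsub hproper)
  have hy0 : 0 < y := hy
  -- multiples lemma
  have hmul : ∀ (b : ℝ), b ∈ Sstar → ∀ (c : ℝ), c ∈ Sstar → ∀ m : ℕ, c + m * b ∈ Sstar := by
    intro b hb c hc m
    induction m with
    | zero => simpa using hc
    | succ k ih =>
        have := hadd _ ih _ hb
        push_cast
        ring_nf
        push_cast at this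
        ring_nf at this
        exact this
  -- pick a ∈ Sstar with a < y
  obtain ⟨a, ha, hay⟩ := exists_lt_of_csInf_lt hne (hinf ▸ hy0)
  -- δ ball around a
  obtain ⟨δ, hδ0, hball⟩ := Metric.isOpen_iff.mp hopen a ha
  -- pick b ∈ Sstar with b < δ
  obtain ⟨b, hb, hbδ⟩ := exists_lt_of_csInf_lt hne (hinf ▸ hδ0)
  have hb0 : 0 < b := hsub hb
  set m : ℕ := ⌊(y - a) / b⌋₊ with hm
  have hya : 0 ≤ y - a := le_of_lt (sub_pos.mpr hay)
  have h1 : (m : ℝ) * b ≤ y - a := by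
    have := Nat.floor_le (a := (y - a) / b) (div_nonneg hya hb0.le)
    calc (m : ℝ) * b ≤ ((y - a) / b) * b := by
          exact mul_le_mul_of_nonneg_right this hb0.le
      _ = y - a := div_mul_cancel₀ _ hb0.ne'
  have h2 : y - a < (m + 1 : ℝ) * b := by
    have := Nat.lt_floor_add_one ((y - a) / b)
    have h' : (y - a) / b < (m : ℝ) + 1 := this
    calc y - a = ((y - a) / b) * b := (div_mul_cancel₀ _ hb0.ne').symm
      _ < ((m : ℝ) + 1) * b := by exact mul_lt_mul_of_pos_right h' hb0
  have hc : y - m * b ∈ Metric.ball a δ := by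
    rw [Metric.mem_ball, Real.dist_eq]
    rw [abs_lt]
    constructor
    · nlinarith
    · nlinarith
  have hcS : y - m * b ∈ Sstar := hball hc
  have : (y - m * b) + m * b ∈ Sstar := hmul b hb _ hcS m
  simpa using hyn (by simpa using this)
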